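/- Let c₁^A, c₂^A, c₁^D, c₂^D ∈ (0,∞) and let z_A, z_{D₁}, z_{D₂} : ℝ → ℝ be differentiable functions satisfying, for all t ≥ 0, z_A'(t) = c₁^D z_{D₁}(t) − c₁^A z_A(t) + c₂^D z_{D₂}(t) − c₂^A z_A(t), z_{D₁}'(t) = c₁^A z_A(t) − c₁^D z_{D₁}(t), z_{D₂}'(t) = c₂^A z_A(t) − c₂^D z_{D₂}(t), with z_A(0) + z_{D₁}(0) + z_{D₂}(0) = 1. Then z_A(t) + z_{D₁}(t) + z_{D₂}(t) = 1 for all t ≥ 0, and lim_{t→∞} z_A(t) = 1/(1 + c₁^A/c₁^D + c₂^A/c₂^D), lim_{t→∞} z_{D₁}(t) = (c₁^A/c₁^D)/(1 + c₁^A/c₁^D + c₂^A/c₂^D), lim_{t→∞} z_{D₂}(t) = (c₂^A/c₂^D)/(1 + c₁^A/c₁^D + c₂^A/c₂^D). -/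

import Mathlib

open Filter Real

/-- Appendix B.2 (eqs. (B.13)–(B.14)): the autonomous linear system for the fractions of
active and colour-1/colour-2 dormant individuals conserves total mass `1` and converges to
the equilibrium `(1, c₁^A/c₁^D, c₂^A/c₂^D)/(1 + c₁^A/c₁^D + c₂^A/c₂^D)`. -/
theorem moran_two_colour_fraction_equilibrium
    (c1A c2A c1D c2D : ℝ) (h1A : 0 < c1A) (h2A : 0 < c2A) (h1D : 0 < c1D) (h2D : 0 < c2D)
    (zA zD1 zD2 : ℝ → ℝ)
    (hA : ∀ t : ℝ, 0 ≤ t →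
      HasDerivAt zA (c1D * zD1 t - c1A * zA t + c2D * zD2 t - c2A * zA t) t)
    (hD1 : ∀ t : ℝ, 0 ≤ t → HasDerivAt zD1 (c1A * zA t - c1D * zD1 t) t)
    (hD2 : ∀ t : ℝ, 0 ≤ t → HasDerivAt zD2 (c2A * zA t - c2D * zD2 t) t)
    (hinit : zA 0 + zD1 0 + zD2 0 = 1) :
    (∀ t : ℝ, 0 ≤ t → zA t + zD1 t + zD2 t = 1)
    ∧ Tendsto zA atTop (nhds (1 / (1 + c1A / c1D + c2A / c2D)))
    ∧ Tendsto zD1 atTop (nhds ((c1A / c1D) / (1 + c1A / c1D + c2A / c2D)))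
    ∧ Tendsto zD2 atTop (nhds ((c2A / c2D) / (1 + c1A / c1D + c2A / c2D))) := by
  have hT : (0:ℝ) < 1 + c1A / c1D + c2A / c2D := by positivity
  set T : ℝ := 1 + c1A / c1D + c2A / c2D with hTdef
  set aeq : ℝ := 1 / T with haeq
  set d1eq : ℝ := (c1A / c1D) / T with hd1eq
  set d2eq : ℝ := (c2A / c2D) / T with hd2eq
  have heqsum : aeq + d1eq + d2eq = 1 := by
    rw [haeq, hd1eq, hd2eq, hTdef]
    field_simp
  have heq1 : c1A * aeq = c1D * d1eq := by
    rw [haeq, hd1eq]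
    field_simp
  have heq2 : c2A * aeq = c2D * d2eq := by
    rw [haeq, hd2eq]
    field_simp
  -- mass conservation
  have hSderiv : ∀ t : ℝ, 0 ≤ t →
      HasDerivAt (fun s => zA s + zD1 s + zD2 s) 0 t := by
    intro t ht
    have := ((hA t ht).add (hD1 t ht)).add (hD2 t ht)
    refine this.congr_deriv (Eq.symm ?_)
    ring
  have mass : ∀ t : ℝ, 0 ≤ t → zA t + zD1 t + zD2 t = 1 := by
    intro t ht
    have hcont : ContinuousOn (fun s => zA s + zD1 s + zD2 s) (Set.Icc 0 t) := by
      intro x hx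
      exact ((hSderiv x hx.1).continuousAt).continuousWithinAt
    have := constant_of_has_deriv_right_zero hcont
      (fun x hx => ((hSderiv x hx.1).hasDerivWithinAt)) t (Set.mem_Icc.2 ⟨ht, le_refl t⟩)
    simpa [hinit] using this
  refine ⟨mass, ?_⟩
  -- deviation variables
  set v : ℝ → ℝ := fun t => zD1 t - d1eq with hv
  set w : ℝ → ℝ := fun t => zD2 t - d2eq with hw
  have hvderiv : ∀ t : ℝ, 0 ≤ t →
      HasDerivAt v (-(c1A + c1D) * v t - c1A * w t) t := by
    intro t ht
    have h := (hD1 t ht).sub_const d1eq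
    refine h.congr_deriv (Eq.symm ?_)
    have hzA : zA t = 1 - zD1 t - zD2 t := by linarith [mass t ht]
    simp only [hv, hw]
    rw [hzA]
    linear_combination c1A * heqsum - heq1
  have hwderiv : ∀ t : ℝ, 0 ≤ t →
      HasDerivAt w (-c2A * v t - (c2A + c2D) * w t) t := by
    intro t ht
    have h := (hD2 t ht).sub_const d2eq
    refine h.congr_deriv (Eq.symm ?_)
    have hzA : zA t = 1 - zD1 t - zD2 t := by linarith [mass t ht]
    simp only [hv, hw]
    rw [hzA]
    linear_combination c2A * heqsum - heq2
  -- Lyapunov function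
  set k : ℝ := min c1D c2D with hk
  have hkpos : 0 < k := lt_min h1D h2D
  set E : ℝ → ℝ := fun t => c2A * (v t)^2 + c1A * (w t)^2 with hE
  set g : ℝ → ℝ := fun t => E t * Real.exp (k * t) with hg
  have hEderiv : ∀ t : ℝ, 0 ≤ t → HasDerivAt E
      (c2A * (2 * v t * (-(c1A + c1D) * v t - c1A * w t))
        + c1A * (2 * w t * (-c2A * v t - (c2A + c2D) * w t))) t := by
    intro t ht
    have := (((hvderiv t ht).pow 2).const_mul c2A).add (((hwderiv t ht).pow 2).const_mul c1A)
    refine this.congr_deriv (Eq.symm ?_)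
    push_cast
    ring
  have hgderiv : ∀ t : ℝ, 0 ≤ t → HasDerivAt g
      ((c2A * (2 * v t * (-(c1A + c1D) * v t - c1A * w t))
        + c1A * (2 * w t * (-c2A * v t - (c2A + c2D) * w t)) + k * E t) * Real.exp (k * t)) t := by
    intro t ht
    have hexp : HasDerivAt (fun s => Real.exp (k * s)) (Real.exp (k * t) * k) t := by
      have := ((hasDerivAt_id t).const_mul k).exp
      simpa using this
    have hm := (hEderiv t ht).mul hexp
    refine hm.congr_deriv (Eq.symm ?_)
    simp only [hE]
    ring
  have hgderiv_nonpos : ∀ t : ℝ, 0 ≤ t →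
      (c2A * (2 * v t * (-(c1A + c1D) * v t - c1A * w t))
        + c1A * (2 * w t * (-c2A * v t - (c2A + c2D) * w t)) + k * E t) * Real.exp (k * t) ≤ 0 := by
    intro t ht
    apply mul_nonpos_of_nonpos_of_nonneg _ (Real.exp_pos _).le
    have hk1 : k ≤ c1D := min_le_left _ _
    have hk2 : k ≤ c2D := min_le_right _ _
    have h1 : c2A * (k - 2 * c1D) * (v t)^2 ≤ 0 := by
      apply mul_nonpos_of_nonpos_of_nonneg _ (sq_nonneg _)
      apply mul_nonpos_of_nonneg_of_nonpos h2A.le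
      linarith
    have h2 : c1A * (k - 2 * c2D) * (w t)^2 ≤ 0 := by
      apply mul_nonpos_of_nonpos_of_nonneg _ (sq_nonneg _)
      apply mul_nonpos_of_nonneg_of_nonpos h1A.le
      linarith
    have h3 : -(4 * (c1A * c2A)) * (v t * w t) ≤ 2 * (c1A * c2A) * ((v t)^2 + (w t)^2) := by
      nlinarith [sq_nonneg (v t + w t), mul_pos h1A h2A]
    simp only [hE]
    nlinarith [h1, h2, h3]
  -- g is antitone on [0, ∞)
  have hganti : AntitoneOn g (Set.Ici 0) := by
    apply antitoneOn_of_hasDerivWithinAt_nonpos (convex_Ici (0:ℝ))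
    · intro x hx
      exact ((hgderiv x hx).continuousAt).continuousWithinAt
    · intro x hx
      rw [interior_Ici] at hx
      exact ((hgderiv x (le_of_lt hx)).hasDerivWithinAt)
    · intro x hx
      rw [interior_Ici] at hx
      exact hgderiv_nonpos x (le_of_lt hx)
  have hEbound : ∀ t : ℝ, 0 ≤ t → E t ≤ E 0 * Real.exp (-(k * t)) := by
    intro t ht
    have h := hganti (Set.self_mem_Ici) (Set.mem_Ici.2 ht) ht
    have hg0 : g 0 = E 0 := by simp [hg]
    rw [hg0] at h
    have hexp : 0 < Real.exp (k * t) := Real.exp_pos _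
    rw [Real.exp_neg, mul_comm (E 0), ← div_eq_inv_mul, le_div_iff₀ hexp]
    simpa [hg, mul_comm] using h
  have hEnonneg : ∀ t : ℝ, 0 ≤ E t := by
    intro t; simp only [hE]; positivity
  have hEtend : Tendsto E atTop (nhds 0) := by
    have hlin : Tendsto (fun t : ℝ => k * t) atTop atTop :=
      Tendsto.const_mul_atTop hkpos tendsto_id
    have hneg : Tendsto (fun t : ℝ => -(k * t)) atTop atBot :=
      tendsto_neg_atTop_atBot.comp hlin
    have hub : Tendsto (fun t => E 0 * Real.exp (-(k * t))) atTop (nhds 0) := by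
      simpa using (Real.tendsto_exp_atBot.comp hneg).const_mul (E 0)
    exact tendsto_of_tendsto_of_tendsto_of_le_of_le' tendsto_const_nhds hub
      (Eventually.of_forall hEnonneg)
      (eventually_atTop.2 ⟨0, fun t ht => hEbound t ht⟩)
  -- convergence of v and w to 0
  have habs_tend : ∀ (u : ℝ → ℝ) (cu : ℝ), 0 < cu → (∀ t, cu * (u t)^2 ≤ E t) →
      Tendsto u atTop (nhds 0) := by
    intro u cu hcu hle
    have hsq : Tendsto (fun t => (u t)^2) atTop (nhds 0) := by
      have hub : Tendsto (fun t => E t / cu) atTop (nhds 0) := by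
        simpa using hEtend.div_const cu
      exact tendsto_of_tendsto_of_tendsto_of_le_of_le' tendsto_const_nhds hub
        (Eventually.of_forall (fun t => sq_nonneg _))
        (Eventually.of_forall (fun t => (le_div_iff₀' hcu).2 (hle t)))
    have habs : Tendsto (fun t => |u t|) atTop (nhds 0) := by
      have := (Real.continuous_sqrt.tendsto 0).comp hsq
      simpa [Function.comp_def, Real.sqrt_sq_eq_abs] using this
    exact tendsto_of_tendsto_of_tendsto_of_le_of_le (by simpa using habs.neg) habs
      (fun t => neg_abs_le _) (fun t => le_abs_self _)
  have hvle : ∀ t, c2A * (v t)^2 ≤ E t := by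
    intro t; simp only [hE]; nlinarith [sq_nonneg (w t)]
  have hwle : ∀ t, c1A * (w t)^2 ≤ E t := by
    intro t; simp only [hE]; nlinarith [sq_nonneg (v t)]
  have hvtend : Tendsto v atTop (nhds 0) := habs_tend v c2A h2A hvle
  have hwtend : Tendsto w atTop (nhds 0) := habs_tend w c1A h1A hwle
  have hD1tend : Tendsto zD1 atTop (nhds d1eq) := by
    have := hvtend.add_const d1eq
    simpa [hv] using this
  have hD2tend : Tendsto zD2 atTop (nhds d2eq) := by
    have := hwtend.add_const d2eq
    simpa [hw] using this
  have hAtend : Tendsto zA atTop (nhds aeq) := by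
    have h1 : Tendsto (fun t => 1 - zD1 t - zD2 t) atTop (nhds (1 - d1eq - d2eq)) :=
      (tendsto_const_nhds.sub hD1tend).sub hD2tend
    have heq : aeq = 1 - d1eq - d2eq := by linarith [heqsum]
    rw [heq]
    apply h1.congr'
    filter_upwards [eventually_atTop.2 ⟨0, fun t (ht : (0:ℝ) ≤ t) => mass t ht⟩] with t ht
    linarith
  exact ⟨hAtend, hD1tend, hD2tend⟩
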